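/- arXiv:1003.5240 — 4 statements merged into one kernel-verified Lean document; each statement's English description precedes it below -/
import Mathlib

section
/- Let T be the infinite d-regular tree with d ≥ 3 and let A be any nonempty finite set of vertices of T (not necessarily connected). Then |∂A| ≥ (d-2)|A| + 2; in particular |∂A| ≥ (d-2)|A|. -/
/-- The edge boundary of a vertex set `A`: edges of `G` with exactly one endpoint in `A`,
recorded as ordered pairs oriented from inside `A` to outside `A`. -/
def edgeBoundary {V : Type*} (G : SimpleGraph V) (A : Set V) : Set (V × V) :=
  {p | p.1 ∈ A ∧ p.2 ∉ A ∧ G.Adj p.1 p.2}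

open SimpleGraph Finset

section Aux

variable {V : Type*} {G : SimpleGraph V} [DecidableEq V]

/-- In a tree, every path realizes the distance. -/
lemma tree_path_length (hconn : G.Connected) (hacyc : G.IsAcyclic) {r w : V}
    {p : G.Walk r w} (hp : p.IsPath) : p.length = G.dist r w := by
  have hle : G.dist r w ≤ p.length := SimpleGraph.dist_le p
  obtain ⟨q, hq⟩ := (hconn r w).exists_walk_length_eq_dist
  have huniq := (isAcyclic_iff_path_unique.mp hacyc) ⟨p, hp⟩ ⟨q.bypass, q.bypass_isPath⟩
  have h1 : p.length = q.bypass.length := by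
    have := congrArg (fun x : G.Path r w => (x : G.Walk r w).length) huniq
    simpa using this
  have h2 : q.bypass.length ≤ q.length := q.length_bypass_le
  omega

/-- In a tree, a vertex has at most one neighbor that is not farther from `r`. -/
lemma tree_unique_low_neighbor (hconn : G.Connected) (hacyc : G.IsAcyclic) {r v w₁ w₂ : V}
    (h1 : G.Adj v w₁) (h2 : G.Adj v w₂)
    (hd1 : G.dist r w₁ ≤ G.dist r v) (hd2 : G.dist r w₂ ≤ G.dist r v) : w₁ = w₂ := by
  have key : ∀ w : V, G.Adj v w → G.dist r w ≤ G.dist r v →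
      ∃ (q : G.Walk r w) (hq : q.IsPath) (ha : G.Adj w v), (q.concat ha).IsPath := by
    intro w hw hdw
    obtain ⟨q0, hq0⟩ := (hconn r w).exists_walk_length_eq_dist
    refine ⟨q0.bypass, q0.bypass_isPath, hw.symm, ?_⟩
    have hqp : (q0.bypass).IsPath := q0.bypass_isPath
    have hqlen : q0.bypass.length = G.dist r w := tree_path_length hconn hacyc hqp
    have hvns : v ∉ q0.bypass.support := by
      intro hv
      have htp : (q0.bypass.takeUntil v hv).IsPath := hqp.takeUntil hv
      have htlen : (q0.bypass.takeUntil v hv).length = G.dist r v :=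
        tree_path_length hconn hacyc htp
      have hsplit := q0.bypass.take_spec hv
      have hlen : (q0.bypass.takeUntil v hv).length + (q0.bypass.dropUntil v hv).length
          = q0.bypass.length := by
        rw [← Walk.length_append, hsplit]
      have hdrop0 : (q0.bypass.dropUntil v hv).length = 0 := by omega
      have := Walk.eq_of_length_eq_zero hdrop0
      exact G.irrefl (this ▸ hw)
    rw [← Walk.isPath_reverse_iff, Walk.reverse_concat]
    exact (Walk.cons_isPath_iff _ _).2 ⟨hqp.reverse, by simpa using hvns⟩
  obtain ⟨q1, hq1, ha1, hp1⟩ := key w₁ h1 hd1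
  obtain ⟨q2, hq2, ha2, hp2⟩ := key w₂ h2 hd2
  have huniq := (isAcyclic_iff_path_unique.mp hacyc) ⟨q1.concat ha1, hp1⟩ ⟨q2.concat ha2, hp2⟩
  have : q1.concat ha1 = q2.concat ha2 := congrArg Subtype.val huniq
  obtain ⟨hv, -⟩ := Walk.concat_inj this
  exact hv

variable [DecidableRel G.Adj]

/-- Forest bound: the number of ordered adjacent pairs inside a finite set is at most
`2 * |A| - 2`. -/
lemma forest_bound (hconn : G.Connected) (hacyc : G.IsAcyclic) (r : V) (A : Finset V)
    (hA : A.Nonempty) :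
    ((A ×ˢ A).filter fun p => G.Adj p.1 p.2).card + 2 ≤ 2 * A.card := by
  induction A using Finset.strongInduction with
  | _ A ih =>
  obtain ⟨v, hv, hmax⟩ := A.exists_max_image (fun u => G.dist r u) hA
  set A' := A.erase v with hA'
  have hN : (A'.filter (fun w => G.Adj v w)).card ≤ 1 := by
    refine Finset.card_le_one.2 fun a ha b hb => ?_
    simp only [Finset.mem_filter] at ha hb
    exact tree_unique_low_neighbor hconn hacyc ha.2 hb.2
      (hmax a (Finset.mem_of_mem_erase ha.1)) (hmax b (Finset.mem_of_mem_erase hb.1))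
  have hsub : ((A ×ˢ A).filter fun p => G.Adj p.1 p.2) ⊆
      ((A' ×ˢ A').filter fun p => G.Adj p.1 p.2) ∪
        ({v} ×ˢ (A'.filter (fun w => G.Adj v w))) ∪
        ((A'.filter (fun w => G.Adj v w)) ×ˢ {v}) := by
    intro p hp
    simp only [Finset.mem_filter, Finset.mem_product] at hp
    obtain ⟨⟨h1, h2⟩, hadj⟩ := hp
    by_cases hp1 : p.1 = v
    · have hp2 : p.2 ≠ v := by rintro h; exact G.irrefl (hp1 ▸ h ▸ hadj)
      refine Finset.mem_union_left _ (Finset.mem_union_right _ ?_)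
      simp only [Finset.mem_product, Finset.mem_singleton, Finset.mem_filter]
      exact ⟨hp1, Finset.mem_erase.2 ⟨hp2, h2⟩, hp1 ▸ hadj⟩
    · by_cases hp2 : p.2 = v
      · refine Finset.mem_union_right _ ?_
        simp only [Finset.mem_product, Finset.mem_singleton, Finset.mem_filter]
        exact ⟨⟨Finset.mem_erase.2 ⟨hp1, h1⟩, hp2 ▸ hadj.symm⟩, hp2⟩
      · refine Finset.mem_union_left _ (Finset.mem_union_left _ ?_)
        simp only [Finset.mem_filter, Finset.mem_product]
        exact ⟨⟨Finset.mem_erase.2 ⟨hp1, h1⟩, Finset.mem_erase.2 ⟨hp2, h2⟩⟩, hadj⟩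
  have hcard : ((A ×ˢ A).filter fun p => G.Adj p.1 p.2).card ≤
      ((A' ×ˢ A').filter fun p => G.Adj p.1 p.2).card + 1 + 1 := by
    calc ((A ×ˢ A).filter fun p => G.Adj p.1 p.2).card
        ≤ _ := Finset.card_le_card hsub
      _ ≤ (((A' ×ˢ A').filter fun p => G.Adj p.1 p.2) ∪
            ({v} ×ˢ (A'.filter (fun w => G.Adj v w)))).card +
          ((A'.filter (fun w => G.Adj v w)) ×ˢ {v}).card := Finset.card_union_le _ _
      _ ≤ ((A' ×ˢ A').filter fun p => G.Adj p.1 p.2).card +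
          ({v} ×ˢ (A'.filter (fun w => G.Adj v w))).card +
          ((A'.filter (fun w => G.Adj v w)) ×ˢ {v}).card := by
            exact Nat.add_le_add_right (Finset.card_union_le _ _) _
      _ ≤ _ := by
            have e1 : ({v} ×ˢ (A'.filter (fun w => G.Adj v w))).card ≤ 1 := by
              rw [Finset.card_product]; simpa using hN
            have e2 : ((A'.filter (fun w => G.Adj v w)) ×ˢ ({v} : Finset V)).card ≤ 1 := by
              rw [Finset.card_product]; simpa using hN
            omega
  by_cases hA'emp : A' = ∅
  · have hAv : A = {v} := by
      rcases (Finset.erase_eq_empty_iff A v).1 hA'emp with h | h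
      · exact absurd h (Finset.nonempty_iff_ne_empty.1 hA)
      · exact h
    subst hAv
    have h0 : ((({v} : Finset V) ×ˢ {v}).filter fun p => G.Adj p.1 p.2) = ∅ := by
      rw [Finset.singleton_product_singleton, Finset.filter_singleton]
      simp
    rw [h0]
    simp
  · have hA'ne : A'.Nonempty := Finset.nonempty_of_ne_empty hA'emp
    have hssub : A' ⊂ A := Finset.erase_ssubset hv
    have := ih A' hssub hA'ne
    have hcardA : A'.card = A.card - 1 := Finset.card_erase_of_mem hv
    have hApos : 1 ≤ A.card := Finset.card_pos.2 hA
    omega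

end Aux

/-- In the infinite `d`-regular tree (`d ≥ 3`), any nonempty finite vertex set `A`
(not necessarily connected) satisfies `|∂A| ≥ (d-2)|A| + 2`, in particular
`|∂A| ≥ (d-2)|A|`. -/
theorem stmt2 {V : Type*} [Infinite V] (G : SimpleGraph V) (d : ℕ) (hd : 3 ≤ d)
    (hconn : G.Connected) (hacyc : G.IsAcyclic)
    (hreg : ∀ v, (G.neighborSet v).ncard = d)
    (A : Finset V) (hA : A.Nonempty) :
    (d - 2) * A.card + 2 ≤ (edgeBoundary G (A : Set V)).ncard ∧
    (d - 2) * A.card ≤ (edgeBoundary G (A : Set V)).ncard := by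
  classical
  have hfin : ∀ v : V, (G.neighborSet v).Finite := by
    intro v
    exact Set.finite_of_ncard_ne_zero (by rw [hreg v]; omega)
  set Nv : V → Finset V := fun v => (hfin v).toFinset with hNv
  have hNvmem : ∀ v w, w ∈ Nv v ↔ G.Adj v w := by
    intro v w; simp [hNv, Set.Finite.mem_toFinset, mem_neighborSet]
  have hNvcard : ∀ v, (Nv v).card = d := by
    intro v
    rw [hNv]
    rw [← Set.ncard_coe_finset]
    simp [hreg v]
  -- the boundary as a Finset
  set B : Finset (V × V) := A.biUnion (fun v => ({v} : Finset V) ×ˢ ((Nv v).filter (· ∉ A)))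
    with hB
  have hBeq : edgeBoundary G (A : Set V) = (B : Set (V × V)) := by
    ext p
    simp only [edgeBoundary, Set.mem_setOf_eq, hB, Finset.coe_biUnion, Set.mem_iUnion,
      Finset.mem_coe, Finset.mem_product, Finset.mem_singleton, Finset.mem_filter]
    constructor
    · rintro ⟨h1, h2, h3⟩
      exact ⟨p.1, h1, rfl, (hNvmem p.1 p.2).2 h3, h2⟩
    · rintro ⟨v, hv, rfl, hn, hna⟩
      exact ⟨hv, hna, (hNvmem p.1 p.2).1 hn⟩
  have hdisj : ∀ x ∈ A, ∀ y ∈ A, x ≠ y →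
      Disjoint (({x} : Finset V) ×ˢ ((Nv x).filter (· ∉ A)))
        (({y} : Finset V) ×ˢ ((Nv y).filter (· ∉ A))) := by
    intro x hx y hy hxy
    refine Finset.disjoint_left.2 fun p hp hq => ?_
    simp only [Finset.mem_product, Finset.mem_singleton] at hp hq
    exact hxy (hp.1.symm.trans hq.1)
  have hBcard : B.card = ∑ v ∈ A, ((Nv v).filter (· ∉ A)).card := by
    rw [hB, Finset.card_biUnion hdisj]
    simp [Finset.card_product]
  -- interior pairs
  set E : Finset (V × V) := (A ×ˢ A).filter (fun p => G.Adj p.1 p.2) with hE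
  have hEcard : E.card = ∑ v ∈ A, ((Nv v).filter (· ∈ A)).card := by
    rw [hE]
    rw [show ((A ×ˢ A).filter fun p => G.Adj p.1 p.2)
        = A.biUnion (fun v => ({v} : Finset V) ×ˢ ((Nv v).filter (· ∈ A))) from ?_]
    · rw [Finset.card_biUnion]
      · simp [Finset.card_product]
      · intro x hx y hy hxy
        refine Finset.disjoint_left.2 fun p hp hq => ?_
        simp only [Finset.mem_product, Finset.mem_singleton] at hp hq
        exact hxy (hp.1.symm.trans hq.1)
    · ext p
      simp only [Finset.mem_filter, Finset.mem_product, Finset.mem_biUnion,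
        Finset.mem_singleton]
      constructor
      · rintro ⟨⟨h1, h2⟩, h3⟩
        exact ⟨p.1, h1, rfl, ⟨(hNvmem p.1 p.2).2 h3, h2⟩⟩
      · rintro ⟨v, hv, rfl, hn, hmem⟩
        exact ⟨⟨hv, hmem⟩, (hNvmem p.1 p.2).1 hn⟩
  have hsum : E.card + B.card = d * A.card := by
    rw [hEcard, hBcard, ← Finset.sum_add_distrib]
    have hterm : ∀ v ∈ A, ((Nv v).filter (· ∈ A)).card + ((Nv v).filter (· ∉ A)).card = d := by
      intro v _
      rw [← hNvcard v]
      exact Finset.card_filter_add_card_filter_not _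
    rw [Finset.sum_congr rfl hterm, Finset.sum_const, smul_eq_mul, mul_comm]
  have hEbound : E.card + 2 ≤ 2 * A.card :=
    forest_bound hconn hacyc (Classical.arbitrary V) A hA
  have hncard : (edgeBoundary G (A : Set V)).ncard = B.card := by
    rw [hBeq, Set.ncard_coe_finset]
  rw [hncard]
  have hmul : (d - 2) * A.card + 2 * A.card = d * A.card := by
    rw [← Nat.add_mul]
    congr 1
    omega
  constructor
  · omega
  · omega
end

section
/- Let G: ℕ → ℝ≥1 satisfy G(r) = e^{o(r)}, i.e., for every ε > 0 there is R with G(r) ≤ e^{εr} for all r ≥ R. If additionally G(2r) ≥ r^{-C₁}G(r)² for all r ≥ 2 (some constant C₁ > 0), then G(r) ≤ (4r)^{C₁} for all r ≥ 2. -/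
/-- If `G : ℕ → [1,∞)` satisfies `G(r) = e^{o(r)}` and the recursive inequality
`G(2r) ≥ r^{-C₁} G(r)²` for all `r ≥ 2`, then `G(r) ≤ (4r)^{C₁}` for all `r ≥ 2`. -/
theorem stmt9 (G : ℕ → ℝ) (hG : ∀ r, 1 ≤ G r) (C₁ : ℝ) (hC₁ : 0 < C₁)
    (hsub : ∀ ε : ℝ, 0 < ε → ∃ R : ℕ, ∀ r : ℕ, R ≤ r → G r ≤ Real.exp (ε * r))
    (hrec : ∀ r : ℕ, 2 ≤ r → (r : ℝ) ^ (-C₁) * G r ^ 2 ≤ G (2 * r)) :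
    ∀ r : ℕ, 2 ≤ r → G r ≤ ((4 * r : ℕ) : ℝ) ^ C₁ := by
  intro r hr
  by_contra hlt
  push_neg at hlt
  have hrpos : (0:ℝ) < r := by exact_mod_cast (by omega : 0 < r)
  have hbpos : (0:ℝ) < (4 * (r:ℝ)) ^ C₁ := Real.rpow_pos_of_pos (by linarith) _
  set L : ℝ := G r / (4 * (r:ℝ)) ^ C₁ with hLdef
  have hcast : ((4 * r : ℕ) : ℝ) = 4 * (r:ℝ) := by push_cast; ring
  have hL1 : 1 < L := by
    rw [hLdef, lt_div_iff₀ hbpos, one_mul]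
    rw [hcast] at hlt
    exact hlt
  -- key iteration
  have key : ∀ k : ℕ, (4 * ((2^k * r : ℕ) : ℝ)) ^ C₁ * L ^ (2^k) ≤ G (2^k * r) := by
    intro k
    induction k with
    | zero =>
      simp only [pow_zero, one_mul, pow_one]
      rw [hLdef, mul_div_cancel₀ _ (ne_of_gt hbpos)]
    | succ k ih =>
      have hs2n : 2 ≤ 2^k * r := le_trans hr (Nat.le_mul_of_pos_left r (Nat.pow_pos (by norm_num)))
      set s : ℝ := ((2^k * r : ℕ) : ℝ) with hsdef
      have hs2 : (2:ℝ) ≤ s := by rw [hsdef]; exact_mod_cast hs2n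
      have hspos : (0:ℝ) < s := by linarith
      have hrecs := hrec (2^k * r) hs2n
      have heq : 2 * (2^k * r) = 2^(k+1) * r := by ring
      rw [heq] at hrecs
      have hcast2 : ((2^(k+1) * r : ℕ) : ℝ) = 2 * s := by
        rw [hsdef]; push_cast; ring
      have hLpow_nonneg : (0:ℝ) ≤ L ^ (2^k) := pow_nonneg (by linarith) _
      have hb_nonneg : (0:ℝ) ≤ (4 * s) ^ C₁ := (Real.rpow_pos_of_pos (by linarith) _).le
      -- square the inductive hypothesis
      have hsq : ((4 * s) ^ C₁ * L ^ (2^k)) ^ 2 ≤ G (2^k * r) ^ 2 := by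
        apply pow_le_pow_left₀ (mul_nonneg hb_nonneg hLpow_nonneg) ih
      -- arithmetic identity
      have hid : s ^ (-C₁) * ((4 * s) ^ C₁) ^ 2 = (16 * s) ^ C₁ := by
        have h1 : s ^ (-C₁) = (s⁻¹) ^ C₁ := by
          rw [Real.rpow_neg hspos.le, Real.inv_rpow hspos.le]
        rw [sq, ← Real.mul_rpow (by linarith) (by linarith), h1,
          ← Real.mul_rpow (by positivity) (by positivity)]
        congr 1
        field_simp
        ring
      calc (4 * ((2^(k+1) * r : ℕ) : ℝ)) ^ C₁ * L ^ (2^(k+1))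
          = (8 * s) ^ C₁ * (L ^ (2^k)) ^ 2 := by
            rw [hcast2, ← pow_mul]
            ring_nf
        _ ≤ (16 * s) ^ C₁ * (L ^ (2^k)) ^ 2 := by
            apply mul_le_mul_of_nonneg_right _ (pow_nonneg hLpow_nonneg 2)
            exact Real.rpow_le_rpow (by linarith) (by linarith) hC₁.le
        _ = s ^ (-C₁) * ((4 * s) ^ C₁ * L ^ (2^k)) ^ 2 := by
            rw [← hid]; ring
        _ ≤ s ^ (-C₁) * G (2^k * r) ^ 2 := by
            apply mul_le_mul_of_nonneg_left hsq (Real.rpow_nonneg hspos.le _)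
        _ ≤ G (2^(k+1) * r) := hrecs
  -- derive contradiction with subexponential growth
  have hlog : 0 < Real.log L := Real.log_pos hL1
  obtain ⟨R, hR⟩ := hsub (Real.log L / (2 * r)) (by positivity)
  have hRle : R ≤ 2^R * r := by
    calc R ≤ 2^R := (Nat.lt_two_pow_self (n := R)).le
      _ ≤ 2^R * r := Nat.le_mul_of_pos_right _ (by omega)
  have h1 := hR (2^R * r) hRle
  have h2 := key R
  have hb1 : (1:ℝ) ≤ (4 * ((2^R * r : ℕ) : ℝ)) ^ C₁ := by
    apply Real.one_le_rpow _ hC₁.le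
    have : (1:ℝ) ≤ ((2^R * r : ℕ) : ℝ) := by
      exact_mod_cast Nat.one_le_iff_ne_zero.mpr (by positivity)
    linarith
  have hLpow1 : (1:ℝ) ≤ L ^ (2^R) := one_le_pow₀ hL1.le
  have hlow : L ^ (2^R) ≤ G (2^R * r) :=
    le_trans (le_mul_of_one_le_left (by linarith) hb1) h2
  have hup : Real.log L / (2 * r) * ((2^R * r : ℕ) : ℝ) = Real.log L * (2^R) / 2 := by
    push_cast
    field_simp
  rw [hup] at h1
  have hLexp : L ^ (2^R : ℕ) = Real.exp (((2^R : ℕ) : ℝ) * Real.log L) := by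
    rw [Real.exp_nat_mul, Real.exp_log (by linarith : (0:ℝ) < L)]
  have hstrict : Real.exp (Real.log L * (2^R) / 2) < Real.exp (((2^R : ℕ) : ℝ) * Real.log L) := by
    apply Real.exp_lt_exp.mpr
    push_cast
    have h2R : (1:ℝ) ≤ (2:ℝ)^R := one_le_pow₀ (by norm_num)
    nlinarith
  rw [hLexp] at hlow
  linarith
end

section
/- Let d ≥ 3 and s ≥ 1. In the infinite d-regular tree T with root 0, fix a vertex w. Then ∑ (d-1)^{-(|u| + d(u,v) + d(v,w))/2}, summed over all pairs of vertices u, v with |u| ≤ s and |v| ≤ s, is at most 3(s+1)^4 (d-1)^{-|w|/2}. -/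
namespace Stmt13Aux

open SimpleGraph Walk

variable {V : Type*} {G : SimpleGraph V}

lemma dist_le_of_mem_support (hconn : G.Connected) {x u v : V} (p : G.Walk x u)
    (hv : v ∈ p.support) : G.dist x v ≤ p.length := by
  classical
  exact (SimpleGraph.dist_le (p.takeUntil v hv)).trans (p.length_takeUntil_le hv)

lemma adj_dist_ne (hconn : G.Connected) (hacyc : G.IsAcyclic) (x : V) {u v : V}
    (h : G.Adj u v) : G.dist x u ≠ G.dist x v := by
  classical
  intro heq
  obtain ⟨P, hPp, hPl⟩ := hconn.exists_path_of_dist x u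
  by_cases hv : v ∈ P.support
  · have h1 : G.dist x v ≤ (P.takeUntil v hv).length := SimpleGraph.dist_le _
    have h2 := congrArg Walk.length (P.take_spec hv)
    rw [Walk.length_append] at h2
    have h3 : (P.dropUntil v hv).length = 0 := by omega
    exact h.ne (Walk.eq_of_length_eq_zero h3).symm
  · obtain ⟨Q, hQp, hQl⟩ := hconn.exists_path_of_dist x v
    have hWp : (Walk.cons h.symm P.reverse).IsPath :=
      hPp.reverse.cons (by simpa [Walk.support_reverse] using hv)
    have := hacyc.path_unique ⟨Walk.cons h.symm P.reverse, hWp⟩ ⟨Q.reverse, hQp.reverse⟩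
    have hlen := congrArg (fun (q : G.Path v x) => q.1.length) this
    simp only [Walk.length_cons, Walk.length_reverse] at hlen
    omega

lemma adj_dist_step (hconn : G.Connected) (hacyc : G.IsAcyclic) (x : V) {u v : V}
    (h : G.Adj u v) : G.dist x v = G.dist x u + 1 ∨ G.dist x u = G.dist x v + 1 := by
  have h1 : G.dist x v ≤ G.dist x u + 1 := by
    have := hconn.dist_triangle (u := x) (v := u) (w := v)
    rwa [SimpleGraph.dist_eq_one_iff_adj.mpr h] at this
  have h2 : G.dist x u ≤ G.dist x v + 1 := by
    have := hconn.dist_triangle (u := x) (v := v) (w := u)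
    rwa [SimpleGraph.dist_eq_one_iff_adj.mpr h.symm] at this
  have h3 := adj_dist_ne hconn hacyc x h
  omega

lemma exists_closer (hconn : G.Connected) {x v : V} {n : ℕ} (hd : G.dist x v = n + 1) :
    ∃ y, G.Adj v y ∧ G.dist x y = n := by
  obtain ⟨p, hp⟩ := hconn.exists_walk_length_eq_dist v x
  rw [SimpleGraph.dist_comm, hd] at hp
  cases p with
  | nil => simp at hp
  | @cons _ y _ hadj q =>
    refine ⟨y, hadj, ?_⟩
    rw [Walk.length_cons] at hp
    have h1 : G.dist x y ≤ n := by
      have := SimpleGraph.dist_le q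
      have hc := SimpleGraph.dist_comm (G := G) (u := x) (v := y)
      omega
    have h2 : G.dist x v ≤ G.dist x y + 1 := by
      have := hconn.dist_triangle (u := x) (v := y) (w := v)
      rw [SimpleGraph.dist_eq_one_iff_adj.mpr hadj.symm] at this
      have hc := SimpleGraph.dist_comm (G := G) (u := y) (v := v)
      omega
    omega

lemma closer_unique (hconn : G.Connected) (hacyc : G.IsAcyclic) {x v y₁ y₂ : V} {n : ℕ}
    (hv : G.dist x v = n + 1) (h1 : G.Adj v y₁) (h2 : G.Adj v y₂)
    (hd1 : G.dist x y₁ = n) (hd2 : G.dist x y₂ = n) : y₁ = y₂ := by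
  obtain ⟨P₁, hP₁p, hP₁l⟩ := hconn.exists_path_of_dist x y₁
  obtain ⟨P₂, hP₂p, hP₂l⟩ := hconn.exists_path_of_dist x y₂
  have hv1 : v ∉ P₁.support := fun hmem => by
    have := dist_le_of_mem_support hconn P₁ hmem; omega
  have hv2 : v ∉ P₂.support := fun hmem => by
    have := dist_le_of_mem_support hconn P₂ hmem; omega
  have hW1 : (Walk.cons h1 P₁.reverse).IsPath :=
    hP₁p.reverse.cons (by simpa [Walk.support_reverse] using hv1)
  have hW2 : (Walk.cons h2 P₂.reverse).IsPath :=
    hP₂p.reverse.cons (by simpa [Walk.support_reverse] using hv2)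
  have heq := hacyc.path_unique ⟨Walk.cons h1 P₁.reverse, hW1⟩ ⟨Walk.cons h2 P₂.reverse, hW2⟩
  have := congrArg (fun (q : G.Path v x) => q.1.getVert 1) heq
  simpa using this

lemma off_geodesic_step (hconn : G.Connected) (hacyc : G.IsAcyclic) (r x : V) :
    ∀ k : ℕ, ∀ v p : V, G.dist x v = k → G.Adj v p → G.dist r p + 1 = G.dist r v →
      G.dist r x < G.dist r v + G.dist x v → G.dist x p + 1 = G.dist x v := by
  intro k
  induction k using Nat.strong_induction_on with
  | _ k IH =>
    intro v p hk hadj hpar hexc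
    have hvx : v ≠ x := by
      rintro rfl
      rw [SimpleGraph.dist_self] at hk
      subst hk
      have := hconn.dist_triangle (u := r) (v := v) (w := v)
      simp [SimpleGraph.dist_self] at hexc
    have hkpos : 0 < k := by
      rcases Nat.eq_zero_or_pos k with h0 | h; swap; exact h
      exfalso; exact hvx (hconn.dist_eq_zero_iff.mp (by rw [hk, h0])).symm
      -- dist x v = 0 → x = v
    rcases adj_dist_step hconn hacyc x hadj with hbad | hgood
    swap
    · omega
    · -- hbad : dist x p = dist x v + 1
      exfalso
      obtain ⟨y, hvy, hy⟩ := exists_closer hconn (show G.dist x v = (k - 1) + 1 by omega)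
      rcases adj_dist_step hconn hacyc r hvy with hry | hry
      · -- dist r y = dist r v + 1 : apply IH to (y, v)
        have hIH := IH (k - 1) (by omega) y v hy hvy.symm (by omega) (by omega)
        omega
      · -- dist r v = dist r y + 1 : y and p both r-closer neighbors of v
        have : p = y := closer_unique hconn hacyc (x := r) (n := G.dist r p)
          hpar.symm hadj hvy rfl (by omega)
        rw [this] at hbad
        omega

lemma decr_on_geodesic (hconn : G.Connected) (hacyc : G.IsAcyclic) (r x : V) {p v : V}
    (hadj : G.Adj v p) (hlev : G.dist r v = G.dist r p + 1)
    (hdec : G.dist x v + 1 = G.dist x p) :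
    G.dist r v + G.dist x v = G.dist r x := by
  have htri : G.dist r x ≤ G.dist r v + G.dist x v := by
    have := hconn.dist_triangle (u := r) (v := v) (w := x)
    have hc := SimpleGraph.dist_comm (G := G) (u := v) (v := x)
    omega
  rcases lt_or_eq_of_le htri with hlt | heq
  · exfalso
    have := off_geodesic_step hconn hacyc r x (G.dist x v) v p rfl hadj hlev.symm hlt
    omega
  · omega

lemma geodesic_unique (hconn : G.Connected) (hacyc : G.IsAcyclic) (r x : V) {v₁ v₂ : V}
    (h1 : G.dist r v₁ + G.dist v₁ x = G.dist r x)
    (h2 : G.dist r v₂ + G.dist v₂ x = G.dist r x)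
    (hl : G.dist r v₁ = G.dist r v₂) : v₁ = v₂ := by
  obtain ⟨P₁, hP₁l⟩ := hconn.exists_walk_length_eq_dist r v₁
  obtain ⟨Q₁, hQ₁l⟩ := hconn.exists_walk_length_eq_dist v₁ x
  obtain ⟨P₂, hP₂l⟩ := hconn.exists_walk_length_eq_dist r v₂
  obtain ⟨Q₂, hQ₂l⟩ := hconn.exists_walk_length_eq_dist v₂ x
  have hW1 : (P₁.append Q₁).length = G.dist r x := by
    rw [Walk.length_append]; omega
  have hW2 : (P₂.append Q₂).length = G.dist r x := by
    rw [Walk.length_append]; omega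
  have hW1p := (P₁.append Q₁).isPath_of_length_eq_dist hW1
  have hW2p := (P₂.append Q₂).isPath_of_length_eq_dist hW2
  have heq := hacyc.path_unique ⟨P₁.append Q₁, hW1p⟩ ⟨P₂.append Q₂, hW2p⟩
  have hg := congrArg (fun (q : G.Path r x) => q.1.getVert (G.dist r v₁)) heq
  simp only [Walk.getVert_append] at hg
  rw [hP₁l, hP₂l] at hg
  simpa [hl] using hg

lemma nbr_finite {d : ℕ} (hd : 3 ≤ d) (hreg : ∀ v, (G.neighborSet v).ncard = d) (v : V) :
    (G.neighborSet v).Finite := by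
  by_contra hinf
  have h0 := (Set.infinite_coe_iff.mp (Set.infinite_coe_iff.mpr hinf)).ncard
  rw [hreg v] at h0
  omega

lemma ball_finite (hconn : G.Connected) (hnb : ∀ v : V, (G.neighborSet v).Finite) (r : V) :
    ∀ n : ℕ, {v : V | G.dist r v ≤ n}.Finite := by
  intro n
  induction n with
  | zero =>
    apply (Set.finite_singleton r).subset
    intro v hv
    simp only [Set.mem_setOf_eq, Nat.le_zero] at hv
    simp [(hconn.dist_eq_zero_iff.mp hv).symm]
  | succ n ih =>
    apply (ih.union (ih.biUnion (fun p _ => hnb p))).subset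
    intro v hv
    simp only [Set.mem_setOf_eq] at hv
    rcases Nat.lt_or_ge (G.dist r v) (n+1) with hlt | hge
    · exact Or.inl (Nat.lt_succ_iff.mp hlt)
    · obtain ⟨y, hvy, hy⟩ := exists_closer hconn (le_antisymm hv hge)
      exact Or.inr (Set.mem_biUnion (show y ∈ {v : V | G.dist r v ≤ n} by simp [hy]) hvy.symm)

/-- The summand. -/
noncomputable def term (G : SimpleGraph V) (d : ℕ) (r x v : V) : ℝ :=
  ((d : ℝ) - 1) ^ (-(((G.dist r v : ℝ) + (G.dist v x : ℝ) - (G.dist r x : ℝ)) / 2))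

lemma term_nonneg {d : ℕ} (hd : 3 ≤ d) (r x v : V) : 0 ≤ term G d r x v := by
  apply Real.rpow_nonneg
  have : (3:ℝ) ≤ (d:ℝ) := by exact_mod_cast hd
  linarith

lemma term_le_one (hconn : G.Connected) {d : ℕ} (hd : 3 ≤ d) (r x v : V) :
    term G d r x v ≤ 1 := by
  have hQ1 : (1:ℝ) ≤ (d:ℝ) - 1 := by
    have : (3:ℝ) ≤ (d:ℝ) := by exact_mod_cast hd
    linarith
  apply Real.rpow_le_one_of_one_le_of_nonpos hQ1
  have htri : G.dist r x ≤ G.dist r v + G.dist v x := hconn.dist_triangle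
  have : (G.dist r x : ℝ) ≤ (G.dist r v : ℝ) + (G.dist v x : ℝ) := by exact_mod_cast htri
  linarith

lemma term_self_one {d : ℕ} (hd : 3 ≤ d) (r x : V) : term G d r x r = 1 := by
  have hQ0 : (0:ℝ) < (d:ℝ) - 1 := by
    have : (3:ℝ) ≤ (d:ℝ) := by exact_mod_cast hd
    linarith
  rw [term, SimpleGraph.dist_self]
  norm_num

lemma level_zero_eq (hconn : G.Connected) (r : V)
    (h0 : {v : V | G.dist r v = 0}.Finite) : h0.toFinset = {r} := by
  ext v
  simp only [Set.Finite.mem_toFinset, Set.mem_setOf_eq, Finset.mem_singleton]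
  constructor
  · intro h
    exact (hconn.dist_eq_zero_iff.mp h).symm
  · rintro rfl
    exact SimpleGraph.dist_self

lemma level_sum_le (hconn : G.Connected) (hacyc : G.IsAcyclic) {d : ℕ} (hd : 3 ≤ d)
    (hreg : ∀ v, (G.neighborSet v).ncard = d) (r x : V)
    (hfin : ∀ m : ℕ, {v : V | G.dist r v = m}.Finite) (n : ℕ) :
    ∑ v ∈ (hfin n).toFinset, term G d r x v ≤ (n : ℝ) + 3/2 := by
  classical
  have hd3 : (3:ℝ) ≤ (d:ℝ) := by exact_mod_cast hd
  have hQ0 : (0:ℝ) < (d:ℝ) - 1 := by linarith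
  have hnbf : ∀ p : V, (G.neighborSet p).Finite := nbr_finite hd hreg
  have hcardnb : ∀ p : V, (hnbf p).toFinset.card = d := by
    intro p
    rw [← Set.ncard_eq_toFinset_card _ (hnbf p), hreg p]
  -- parent function
  have hex : ∀ v : V, G.dist r v ≠ 0 → ∃ y, G.Adj v y ∧ G.dist r y + 1 = G.dist r v := by
    intro v h
    obtain ⟨m, hm⟩ : ∃ m, G.dist r v = m + 1 := ⟨G.dist r v - 1, by omega⟩
    obtain ⟨y, h1, h2⟩ := exists_closer hconn hm
    exact ⟨y, h1, by omega⟩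
  choose! par hpadj hpdist using hex
  have hbase : ∑ v ∈ (hfin 0).toFinset, term G d r x v = 1 := by
    rw [level_zero_eq hconn r (hfin 0), Finset.sum_singleton, term_self_one hd]
  induction n with
  | zero => rw [hbase]; norm_num
  | succ n ih =>
    set L1 := (hfin (n+1)).toFinset with hL1
    set L0 := (hfin n).toFinset with hL0def
    have hmemL1 : ∀ v, v ∈ L1 ↔ G.dist r v = n + 1 := by
      intro v; simp [hL1, Set.Finite.mem_toFinset]
    have hmemL0 : ∀ v, v ∈ L0 ↔ G.dist r v = n := by
      intro v; simp [hL0def, Set.Finite.mem_toFinset]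
    set D := L1.filter (fun v => G.dist x v + 1 = G.dist x (par v)) with hDdef
    set I := L1.filter (fun v => ¬ (G.dist x v + 1 = G.dist x (par v))) with hIdef
    have hsplit : ∑ v ∈ L1, term G d r x v
        = ∑ v ∈ D, term G d r x v + ∑ v ∈ I, term G d r x v :=
      (Finset.sum_filter_add_sum_filter_not L1 _ _).symm
    -- basic facts for members of L1
    have hne0 : ∀ v, v ∈ L1 → G.dist r v ≠ 0 := fun v hv => by
      rw [hmemL1 v] at hv; omega
    -- D has at most one element
    have hgeo : ∀ v ∈ D, G.dist r v + G.dist v x = G.dist r x := by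
      intro v hv
      obtain ⟨hvL, hvP⟩ := Finset.mem_filter.mp hv
      have hdi := (hmemL1 v).mp hvL
      have hadj := hpadj v (hne0 v hvL)
      have hlev : G.dist r v = G.dist r (par v) + 1 := by
        have := hpdist v (hne0 v hvL); omega
      have := decr_on_geodesic hconn hacyc r x hadj hlev hvP
      have hc := SimpleGraph.dist_comm (G := G) (u := v) (v := x)
      omega
    have hDcard : D.card ≤ 1 := by
      rw [Finset.card_le_one]
      intro a ha b hb
      apply geodesic_unique hconn hacyc r x (hgeo a ha) (hgeo b hb)
      have h1 := (hmemL1 a).mp (Finset.mem_filter.mp ha).1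
      have h2 := (hmemL1 b).mp (Finset.mem_filter.mp hb).1
      omega
    have hDsum : ∑ v ∈ D, term G d r x v ≤ 1 := by
      calc ∑ v ∈ D, term G d r x v ≤ ∑ _v ∈ D, (1:ℝ) :=
            Finset.sum_le_sum (fun v _ => term_le_one hconn hd r x v)
        _ = D.card := by simp
        _ ≤ 1 := by exact_mod_cast hDcard
    -- members of I
    have hIterm : ∀ v ∈ I, term G d r x v = ((d:ℝ)-1)⁻¹ * term G d r x (par v) := by
      intro v hv
      obtain ⟨hvL, hvP⟩ := Finset.mem_filter.mp hv
      have hdi := (hmemL1 v).mp hvL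
      have hadj := hpadj v (hne0 v hvL)
      have hlev := hpdist v (hne0 v hvL)
      have hstep : G.dist x v = G.dist x (par v) + 1 := by
        rcases adj_dist_step hconn hacyc x hadj with h | h
        · exact absurd h.symm hvP
        · exact h
      have e2 : G.dist v x = G.dist (par v) x + 1 := by
        have c1 := SimpleGraph.dist_comm (G := G) (u := v) (v := x)
        have c2 := SimpleGraph.dist_comm (G := G) (u := par v) (v := x)
        omega
      rw [term, term]
      have hexp : (-(((G.dist r v : ℝ) + (G.dist v x : ℝ) - (G.dist r x : ℝ)) / 2))
          = (-1) + (-(((G.dist r (par v) : ℝ) + (G.dist (par v) x : ℝ)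
              - (G.dist r x : ℝ)) / 2)) := by
        have e1 : (G.dist r v : ℝ) = (G.dist r (par v) : ℝ) + 1 := by
          exact_mod_cast (by omega : G.dist r v = G.dist r (par v) + 1)
        have e2' : (G.dist v x : ℝ) = (G.dist (par v) x : ℝ) + 1 := by exact_mod_cast e2
        rw [e1, e2']; ring
      rw [hexp, Real.rpow_add hQ0, Real.rpow_neg_one]
    have hmaps : ∀ v ∈ I, par v ∈ L0 := by
      intro v hv
      have hvL := (Finset.mem_filter.mp hv).1
      rw [hmemL0]
      have := hpdist v (hne0 v hvL)
      have := (hmemL1 v).mp hvL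
      omega
    have hIsum : ∑ v ∈ I, term G d r x (par v)
        = ∑ p ∈ L0, ∑ v ∈ I.filter (fun v => par v = p), term G d r x (par v) :=
      (Finset.sum_fiberwise_of_maps_to hmaps _).symm
    -- fiber bounds
    have hfibsub : ∀ p, (I.filter (fun v => par v = p)) ⊆ (hnbf p).toFinset := by
      intro p v hv
      obtain ⟨hvI, hvp⟩ := Finset.mem_filter.mp hv
      have hadj := hpadj v (hne0 v (Finset.mem_filter.mp hvI).1)
      rw [hvp] at hadj
      simp [Set.Finite.mem_toFinset]
      exact hadj.symm
    have hfibval : ∀ p ∈ L0, ∑ v ∈ I.filter (fun v => par v = p), term G d r x (par v)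
        = ((I.filter (fun v => par v = p)).card : ℝ) * term G d r x p := by
      intro p _
      rw [Finset.sum_congr rfl (fun v hv => by
        rw [(Finset.mem_filter.mp hv).2]), Finset.sum_const, nsmul_eq_mul]
    rcases Nat.eq_zero_or_pos n with rfl | hn
    · -- n = 0 : L0 = {r}
      have hL0r : L0 = {r} := level_zero_eq hconn r (hfin 0)
      have hIf : ∑ v ∈ I, term G d r x (par v) ≤ (d:ℝ) := by
        rw [hIsum, hL0r, Finset.sum_singleton, hfibval r (by rw [hL0r]; simp),
          term_self_one hd, mul_one]
        have hcc : (I.filter (fun v => par v = r)).card ≤ d := by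
          calc (I.filter (fun v => par v = r)).card ≤ (hnbf r).toFinset.card :=
                Finset.card_le_card (hfibsub r)
            _ = d := hcardnb r
        exact_mod_cast hcc
      have hIs2 : ∑ v ∈ I, term G d r x v ≤ ((d:ℝ)-1)⁻¹ * (d:ℝ) := by
        rw [Finset.sum_congr rfl hIterm, ← Finset.mul_sum]
        apply mul_le_mul_of_nonneg_left hIf (by positivity)
      have hdd : ((d:ℝ)-1)⁻¹ * (d:ℝ) ≤ 3/2 := by
        rw [inv_mul_le_iff₀ hQ0]
        linarith
      rw [hsplit]
      push_cast
      linarith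
    · -- n ≥ 1
      obtain ⟨m, rfl⟩ : ∃ m, n = m + 1 := ⟨n - 1, by omega⟩
      have hfibcard : ∀ p ∈ L0, (I.filter (fun v => par v = p)).card ≤ d - 1 := by
        intro p hp
        have hdp : G.dist r p = m + 1 := (hmemL0 p).mp hp
        have hpne0 : G.dist r p ≠ 0 := by omega
        have hparp : par p ∈ (hnbf p).toFinset := by
          simp [Set.Finite.mem_toFinset]
          exact hpadj p hpne0
        have hsub2 : (I.filter (fun v => par v = p)) ⊆ (hnbf p).toFinset.erase (par p) := by
          intro v hv
          rw [Finset.mem_erase]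
          refine ⟨?_, hfibsub p hv⟩
          intro hvpp
          have hvI := (Finset.mem_filter.mp hv).1
          have hv1 := (hmemL1 v).mp (Finset.mem_filter.mp hvI).1
          have := hpdist p hpne0
          rw [hvpp] at hv1
          omega
        calc (I.filter (fun v => par v = p)).card
            ≤ ((hnbf p).toFinset.erase (par p)).card := Finset.card_le_card hsub2
          _ = d - 1 := by rw [Finset.card_erase_of_mem hparp, hcardnb p]
      have hIf : ∑ v ∈ I, term G d r x (par v)
          ≤ ((d:ℝ) - 1) * ∑ p ∈ L0, term G d r x p := by
        rw [hIsum, Finset.mul_sum]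
        apply Finset.sum_le_sum
        intro p hp
        rw [hfibval p hp]
        apply mul_le_mul_of_nonneg_right _ (term_nonneg hd r x p)
        have : ((d:ℝ) - 1) = ((d - 1 : ℕ) : ℝ) := by push_cast [Nat.cast_sub (by omega : 1 ≤ d)]; ring
        rw [this]
        exact_mod_cast hfibcard p hp
      have hIs2 : ∑ v ∈ I, term G d r x v ≤ ∑ p ∈ L0, term G d r x p := by
        rw [Finset.sum_congr rfl hIterm, ← Finset.mul_sum]
        calc ((d:ℝ)-1)⁻¹ * ∑ v ∈ I, term G d r x (par v)
            ≤ ((d:ℝ)-1)⁻¹ * (((d:ℝ) - 1) * ∑ p ∈ L0, term G d r x p) :=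
              mul_le_mul_of_nonneg_left hIf (by positivity)
          _ = ∑ p ∈ L0, term G d r x p := by
              field_simp
      have hihn : ∑ p ∈ L0, term G d r x p ≤ ((m+1 : ℕ) : ℝ) + 3/2 := ih
      rw [hsplit]
      push_cast
      push_cast at hihn
      linarith

lemma gauss_sum (m : ℕ) : ∑ n ∈ Finset.range m, ((n:ℝ) + 3/2) = (m:ℝ) * ((m:ℝ) + 2) / 2 := by
  induction m with
  | zero => simp
  | succ k ihk =>
    rw [Finset.sum_range_succ, ihk]
    push_cast
    ring

lemma ball_sum_le (hconn : G.Connected) (hacyc : G.IsAcyclic) {d : ℕ} (hd : 3 ≤ d)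
    (hreg : ∀ v, (G.neighborSet v).ncard = d) (r x : V) (s : ℕ)
    (hfin : ∀ m : ℕ, {v : V | G.dist r v = m}.Finite)
    (hball : {v : V | G.dist r v ≤ s}.Finite) :
    ∑ v ∈ hball.toFinset, term G d r x v ≤ ((s:ℝ) + 1) * ((s:ℝ) + 3) / 2 := by
  classical
  have hmaps : ∀ v ∈ hball.toFinset, G.dist r v ∈ Finset.range (s+1) := by
    intro v hv
    simp only [Set.Finite.mem_toFinset, Set.mem_setOf_eq] at hv
    simp [Nat.lt_succ_iff, hv]
  rw [← Finset.sum_fiberwise_of_maps_to hmaps (term G d r x)]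
  have hfil : ∀ n ∈ Finset.range (s+1),
      hball.toFinset.filter (fun v => G.dist r v = n) = (hfin n).toFinset := by
    intro n hn
    rw [Finset.mem_range, Nat.lt_succ_iff] at hn
    ext v
    simp only [Finset.mem_filter, Set.Finite.mem_toFinset, Set.mem_setOf_eq]
    constructor
    · rintro ⟨_, h⟩; exact h
    · intro h; exact ⟨by omega, h⟩
  calc ∑ n ∈ Finset.range (s+1), ∑ v ∈ hball.toFinset.filter (fun v => G.dist r v = n),
          term G d r x v
      = ∑ n ∈ Finset.range (s+1), ∑ v ∈ (hfin n).toFinset, term G d r x v :=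
        Finset.sum_congr rfl (fun n hn => by rw [hfil n hn])
    _ ≤ ∑ n ∈ Finset.range (s+1), ((n:ℝ) + 3/2) :=
        Finset.sum_le_sum (fun n _ => level_sum_le hconn hacyc hd hreg r x hfin n)
    _ = ((s:ℝ) + 1) * ((s:ℝ) + 3) / 2 := by
        rw [gauss_sum]
        push_cast
        ring

end Stmt13Aux

lemma split_term {V : Type*} {G : SimpleGraph V} (hconn : G.Connected) {d : ℕ} (hd : 3 ≤ d)
    (r w u v : V) :
    ((d : ℝ) - 1) ^
        (-((G.dist r u : ℝ) + (G.dist u v : ℝ) + (G.dist v w : ℝ)) / 2)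
      = ((d : ℝ) - 1) ^ (-(G.dist r w : ℝ) / 2) *
          (Stmt13Aux.term G d r w v * Stmt13Aux.term G d r v u) := by
  have hd3 : (3:ℝ) ≤ (d:ℝ) := by exact_mod_cast hd
  have hQ0 : (0:ℝ) < (d:ℝ) - 1 := by linarith
  simp only [Stmt13Aux.term]
  rw [← Real.rpow_add hQ0, ← Real.rpow_add hQ0]
  congr 1
  ring

/-- In the infinite `d`-regular tree (`d ≥ 3`) with root `0` and a fixed vertex `w`,
`∑_{|u|,|v| ≤ s} (d-1)^{-(|u| + d(u,v) + d(v,w))/2} ≤ 3(s+1)⁴ (d-1)^{-|w|/2}`. -/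
theorem stmt13 {V : Type*} (G : SimpleGraph V) (d : ℕ) (hd : 3 ≤ d)
    (hconn : G.Connected) (hacyc : G.IsAcyclic)
    (hreg : ∀ v, (G.neighborSet v).ncard = d)
    (root w : V) (s : ℕ) (hs : 1 ≤ s) :
    ∑' p : {p : V × V // G.dist root p.1 ≤ s ∧ G.dist root p.2 ≤ s},
        ((d : ℝ) - 1) ^
          (-((G.dist root p.1.1 : ℝ) + (G.dist p.1.1 p.1.2 : ℝ) +
              (G.dist p.1.2 w : ℝ)) / 2) ≤
      3 * (s + 1 : ℝ) ^ 4 * ((d : ℝ) - 1) ^ (-(G.dist root w : ℝ) / 2) := by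
  classical
  have hd3 : (3:ℝ) ≤ (d:ℝ) := by exact_mod_cast hd
  have hQ0 : (0:ℝ) < (d:ℝ) - 1 := by linarith
  have hnbf : ∀ p : V, (G.neighborSet p).Finite := Stmt13Aux.nbr_finite hd hreg
  have hball : {v : V | G.dist root v ≤ s}.Finite := Stmt13Aux.ball_finite hconn hnbf root s
  have hfin : ∀ m : ℕ, {v : V | G.dist root v = m}.Finite := by
    intro m
    apply (Stmt13Aux.ball_finite hconn hnbf root m).subset
    intro v hv
    simp only [Set.mem_setOf_eq] at hv ⊢
    omega
  have hSfin : {p : V × V | G.dist root p.1 ≤ s ∧ G.dist root p.2 ≤ s}.Finite :=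
    hball.prod hball
  haveI : Fintype {p : V × V // G.dist root p.1 ≤ s ∧ G.dist root p.2 ≤ s} := hSfin.fintype
  rw [tsum_fintype]
  rw [← Finset.sum_subtype hSfin.toFinset
      (fun q => by simp [Set.Finite.mem_toFinset])
      (fun q : V × V => ((d : ℝ) - 1) ^
        (-((G.dist root q.1 : ℝ) + (G.dist q.1 q.2 : ℝ) + (G.dist q.2 w : ℝ)) / 2))]
  have hprodeq : hSfin.toFinset = hball.toFinset ×ˢ hball.toFinset := by
    ext q
    simp only [Set.Finite.mem_toFinset, Finset.mem_product, Set.mem_setOf_eq]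
  rw [hprodeq, Finset.sum_product_right]
  have hCpos : (0:ℝ) < ((d : ℝ) - 1) ^ (-(G.dist root w : ℝ) / 2) :=
    Real.rpow_pos_of_pos hQ0 _
  have hBsum : ∀ x : V, ∑ v ∈ hball.toFinset, Stmt13Aux.term G d root x v
      ≤ ((s:ℝ) + 1) * ((s:ℝ) + 3) / 2 :=
    fun x => Stmt13Aux.ball_sum_le hconn hacyc hd hreg root x s hfin hball
  have hBpos : (0:ℝ) ≤ ((s:ℝ) + 1) * ((s:ℝ) + 3) / 2 := by positivity
  calc ∑ v ∈ hball.toFinset, ∑ u ∈ hball.toFinset,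
        ((d : ℝ) - 1) ^
          (-((G.dist root u : ℝ) + (G.dist u v : ℝ) + (G.dist v w : ℝ)) / 2)
      = ∑ v ∈ hball.toFinset,
          (((d : ℝ) - 1) ^ (-(G.dist root w : ℝ) / 2) * Stmt13Aux.term G d root w v *
            ∑ u ∈ hball.toFinset, Stmt13Aux.term G d root v u) := by
        apply Finset.sum_congr rfl
        intro v _
        rw [Finset.mul_sum]
        apply Finset.sum_congr rfl
        intro u _
        rw [split_term hconn hd root w u v]
        ring
    _ ≤ ∑ v ∈ hball.toFinset,
          (((d : ℝ) - 1) ^ (-(G.dist root w : ℝ) / 2) * Stmt13Aux.term G d root w v *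
            (((s:ℝ) + 1) * ((s:ℝ) + 3) / 2)) := by
        apply Finset.sum_le_sum
        intro v _
        apply mul_le_mul_of_nonneg_left (hBsum v)
        have := Stmt13Aux.term_nonneg (G := G) hd root w v
        positivity
    _ = ((d : ℝ) - 1) ^ (-(G.dist root w : ℝ) / 2) * (((s:ℝ) + 1) * ((s:ℝ) + 3) / 2) *
          ∑ v ∈ hball.toFinset, Stmt13Aux.term G d root w v := by
        rw [Finset.mul_sum]
        apply Finset.sum_congr rfl
        intro v _
        ring
    _ ≤ ((d : ℝ) - 1) ^ (-(G.dist root w : ℝ) / 2) * (((s:ℝ) + 1) * ((s:ℝ) + 3) / 2) *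
          (((s:ℝ) + 1) * ((s:ℝ) + 3) / 2) := by
        apply mul_le_mul_of_nonneg_left (hBsum w) (by positivity)
    _ ≤ 3 * ((s:ℝ) + 1) ^ 4 * ((d : ℝ) - 1) ^ (-(G.dist root w : ℝ) / 2) := by
        have hsr : (1:ℝ) ≤ (s:ℝ) := by exact_mod_cast hs
        nlinarith [hCpos, sq_nonneg ((s:ℝ) + 1), sq_nonneg ((s:ℝ) - 1),
          mul_pos hCpos (by positivity : (0:ℝ) < ((s:ℝ)+1)^2)]
end

section
/- For any vertices x, u, v, w of a tree, |u| + d(u,v) + d(v,w) ≥ |w|, where |·| denotes distance to a fixed root 0 and d is the tree metric. Moreover, writing a for the branch point of 0, u toward v and b for the branch point toward w, one has |u| + d(u,v) + d(v,w) ≥ 2d(a,u) + 2d(b,v) + |w|. -/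
/-- In a tree with root `0`: for any vertices `u, v, w`,
`|u| + d(u,v) + d(v,w) ≥ |w|`.  Moreover, if `a` is the branch point (median) of
`0, u, v` and `b` is the branch point (median) of `0, v, w`, then
`|u| + d(u,v) + d(v,w) ≥ 2·d(a,u) + 2·d(b,v) + |w|`.
(The median of three vertices is characterized by lying on all three pairwise geodesics.) -/
theorem stmt14 {V : Type*} (G : SimpleGraph V)
    (hconn : G.Connected) (hacyc : G.IsAcyclic)
    (root u v w a b : V)
    (ha₁ : G.dist root u = G.dist root a + G.dist a u)
    (ha₂ : G.dist root v = G.dist root a + G.dist a v)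
    (ha₃ : G.dist u v = G.dist u a + G.dist a v)
    (hb₁ : G.dist root v = G.dist root b + G.dist b v)
    (hb₂ : G.dist root w = G.dist root b + G.dist b w)
    (hb₃ : G.dist v w = G.dist v b + G.dist b w) :
    G.dist root w ≤ G.dist root u + G.dist u v + G.dist v w ∧
    2 * G.dist a u + 2 * G.dist b v + G.dist root w ≤
      G.dist root u + G.dist u v + G.dist v w := by
  have c1 := (SimpleGraph.dist_comm (G:=G) (u:=a) (v:=u))
  have c2 := (SimpleGraph.dist_comm (G:=G) (u:=b) (v:=v))
  constructor <;> omega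
end
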